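/- For the function B(x) = 1 − √(1−2x) and integer i ≥ 1, the Taylor expansion of B(x)^{i-1} at x = 0 has its coefficient of x^{i-1+l} equal to (i-1)(i+l)(i+l+1)···(i+2l-2)/(2l)!! for each l ≥ 1, and the coefficient of x^{i-1} equal to 1. -/

import Mathlib

open Nat Finset Topology ContDiff

namespace TCB

noncomputable def B : ℝ → ℝ := fun x => 1 - Real.sqrt (1 - 2 * x)

def U : Set ℝ := Set.Iio (1/2 : ℝ)

lemma Uopen : IsOpen U := isOpen_Iio

lemma U0 : (0:ℝ) ∈ U := by norm_num [U]

lemma upos {x : ℝ} (hx : x ∈ U) : 0 < 1 - 2 * x := by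
  simp only [U, Set.mem_Iio] at hx; linarith

lemma CDB : ContDiffOn ℝ ∞ B U := by
  intro x hx
  have h := upos hx
  have : ContDiffAt ℝ ∞ B x := by
    have h1 : ContDiffAt ℝ ∞ (fun x : ℝ => 1 - 2 * x) x := by fun_prop
    have h2 : ContDiffAt ℝ ∞ Real.sqrt (1 - 2 * x) := Real.contDiffAt_sqrt h.ne'
    exact contDiffAt_const.sub (h2.comp x h1)
  exact this.contDiffWithinAt

lemma CDBpow (m : ℕ) : ContDiffOn ℝ ∞ (fun x => B x ^ m) U := CDB.pow m

lemma CDiter {f : ℝ → ℝ} (hf : ContDiffOn ℝ ∞ f U) (n : ℕ) :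
    ContDiffOn ℝ ∞ (iteratedDeriv n f) U := by
  induction n with
  | zero => simpa using hf
  | succ n ih =>
    rw [iteratedDeriv_succ]
    exact ih.deriv_of_isOpen Uopen (by norm_num)

lemma diffat {f : ℝ → ℝ} (hf : ContDiffOn ℝ ∞ f U) (n : ℕ) {x : ℝ} (hx : x ∈ U) :
    DifferentiableAt ℝ (iteratedDeriv n f) x := by
  have := (CDiter hf n).differentiableOn (by norm_num)
  exact (this x hx).differentiableAt (Uopen.mem_nhds hx)

lemma iD_add {f g : ℝ → ℝ} (hf : ContDiffOn ℝ ∞ f U) (hg : ContDiffOn ℝ ∞ g U) (n : ℕ) :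
    ∀ x ∈ U, iteratedDeriv n (fun y => f y + g y) x
      = iteratedDeriv n f x + iteratedDeriv n g x := by
  induction n with
  | zero => intro x _; simp
  | succ n ih =>
    intro x hx
    rw [iteratedDeriv_succ]
    have hev : iteratedDeriv n (fun y => f y + g y)
        =ᶠ[𝓝 x] fun y => iteratedDeriv n f y + iteratedDeriv n g y :=
      Filter.eventuallyEq_of_mem (Uopen.mem_nhds hx) ih
    rw [hev.deriv_eq, deriv_fun_add (diffat hf n hx) (diffat hg n hx),
      ← iteratedDeriv_succ, ← iteratedDeriv_succ]

lemma iD_cmul (c : ℝ) {g : ℝ → ℝ} (hg : ContDiffOn ℝ ∞ g U) (n : ℕ) :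
    ∀ x ∈ U, iteratedDeriv n (fun y => c * g y) x = c * iteratedDeriv n g x := by
  induction n with
  | zero => intro x _; simp
  | succ n ih =>
    intro x hx
    rw [iteratedDeriv_succ]
    have hev : iteratedDeriv n (fun y => c * g y)
        =ᶠ[𝓝 x] fun y => c * iteratedDeriv n g y :=
      Filter.eventuallyEq_of_mem (Uopen.mem_nhds hx) ih
    rw [hev.deriv_eq, deriv_const_mul c (diffat hg n hx), ← iteratedDeriv_succ]

lemma iD_idmul {g : ℝ → ℝ} (hg : ContDiffOn ℝ ∞ g U) (n : ℕ) :
    ∀ x ∈ U, iteratedDeriv n (fun y => y * g y) x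
      = x * iteratedDeriv n g x + n * iteratedDeriv (n - 1) g x := by
  induction n with
  | zero => intro x _; simp
  | succ n ih =>
    intro x hx
    rw [iteratedDeriv_succ]
    have hev : iteratedDeriv n (fun y => y * g y)
        =ᶠ[𝓝 x] fun y => y * iteratedDeriv n g y + n * iteratedDeriv (n - 1) g y :=
      Filter.eventuallyEq_of_mem (Uopen.mem_nhds hx) ih
    rw [hev.deriv_eq]
    have h1 : DifferentiableAt ℝ (fun y => y * iteratedDeriv n g y) x :=
      differentiableAt_fun_id.mul (diffat hg n hx)
    have h2 : DifferentiableAt ℝ (fun y => (n:ℝ) * iteratedDeriv (n-1) g y) x :=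
      (diffat hg (n-1) hx).const_mul _
    rw [deriv_fun_add h1 h2, deriv_fun_mul differentiableAt_fun_id (diffat hg n hx),
      deriv_const_mul _ (diffat hg (n-1) hx)]
    simp only [deriv_id'', one_mul, ← iteratedDeriv_succ]
    rcases Nat.eq_zero_or_pos n with h | h
    · subst h; simp [add_comm]
    · rw [Nat.sub_add_cancel h]
      push_cast
      ring

lemma B0 : B 0 = 0 := by simp [B]

lemma funeq {x : ℝ} (hx : x ∈ U) (m : ℕ) :
    B x ^ (m + 1) = x * B x ^ m + (1/2) * B x ^ (m + 2) := by
  have h := (upos hx).le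
  have hs : Real.sqrt (1 - 2*x) ^ 2 = 1 - 2*x := Real.sq_sqrt h
  have hB : B x = x + (1/2) * B x ^ 2 := by
    simp only [B]; nlinarith [hs]
  calc B x ^ (m+1) = B x ^ m * B x := by ring
    _ = B x ^ m * (x + (1/2) * B x ^ 2) := by rw [← hB]
    _ = x * B x ^ m + (1/2) * B x ^ (m+2) := by ring

noncomputable def a (m n : ℕ) : ℝ := iteratedDeriv n (fun x => B x ^ m) 0 / n !

lemma arec (m n : ℕ) (hn : 1 ≤ n) :
    a (m + 1) n = a m (n - 1) + a (m + 2) n / 2 := by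
  have hev : (fun x => B x ^ (m+1))
      =ᶠ[𝓝 (0:ℝ)] fun x => x * B x ^ m + (1/2) * B x ^ (m+2) :=
    Filter.eventuallyEq_of_mem (Uopen.mem_nhds U0) (fun x hx => funeq hx m)
  have h1 : iteratedDeriv n (fun x => B x ^ (m+1)) 0
      = iteratedDeriv n (fun x => x * B x ^ m + (1/2) * B x ^ (m+2)) 0 :=
    hev.iteratedDeriv_eq n
  have h2 : iteratedDeriv n (fun x => x * B x ^ m + (1/2) * B x ^ (m+2)) 0
      = iteratedDeriv n (fun x => x * B x ^ m) 0
        + iteratedDeriv n (fun x => (1/2) * B x ^ (m+2)) 0 := by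
    have hf : ContDiffOn ℝ ∞ (fun x : ℝ => x * B x ^ m) U :=
      (contDiffOn_id).mul (CDBpow m)
    have hg : ContDiffOn ℝ ∞ (fun x : ℝ => (1/2 : ℝ) * B x ^ (m+2)) U :=
      contDiffOn_const.mul (CDBpow (m+2))
    exact iD_add hf hg n 0 U0
  have h3 : iteratedDeriv n (fun x => x * B x ^ m) 0
      = n * iteratedDeriv (n-1) (fun x => B x ^ m) 0 := by
    have := iD_idmul (CDBpow m) n 0 U0
    simpa using this
  have h4 : iteratedDeriv n (fun x => (1/2) * B x ^ (m+2)) 0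
      = (1/2) * iteratedDeriv n (fun x => B x ^ (m+2)) 0 :=
    iD_cmul _ (CDBpow (m+2)) n 0 U0
  have hfac : (n ! : ℝ) = n * (n-1)! := by
    obtain ⟨k, rfl⟩ := Nat.exists_eq_add_of_le hn
    rw [add_comm 1 k]
    push_cast [Nat.add_sub_cancel, Nat.factorial_succ]
    ring
  have hnpos : (0:ℝ) < n ! := by positivity
  simp only [a, h1, h2, h3, h4]
  rw [hfac]
  field_simp

lemma derivB : ∀ n : ℕ, ∀ x ∈ U, iteratedDeriv (n+1) B x
    = (∏ t ∈ range n, (2*(t:ℝ)+1)) * Real.sqrt (1 - 2*x) / (1 - 2*x) ^ (n+1) := by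
  have key : ∀ (C : ℝ) (n : ℕ) {x : ℝ}, x ∈ U →
      HasDerivAt (fun y => C * Real.sqrt (1 - 2*y) / (1 - 2*y)^(n+1))
        (C * (2*(n:ℝ)+1) * Real.sqrt (1 - 2*x) / (1 - 2*x)^(n+2)) x := by
    intro C n x hx
    have hu : 0 < 1 - 2*x := upos hx
    have hs : 0 < Real.sqrt (1 - 2*x) := Real.sqrt_pos.mpr hu
    have hinner : HasDerivAt (fun y : ℝ => 1 - 2*y) (-2) x := by
      simpa using ((hasDerivAt_id x).const_mul (2:ℝ)).const_sub 1
    have hsq : HasDerivAt (fun y : ℝ => Real.sqrt (1 - 2*y))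
        (1 / (2 * Real.sqrt (1 - 2*x)) * (-2)) x :=
      (Real.hasDerivAt_sqrt hu.ne').comp x hinner
    have hnum : HasDerivAt (fun y : ℝ => C * Real.sqrt (1 - 2*y))
        (C * (1 / (2 * Real.sqrt (1 - 2*x)) * (-2))) x := hsq.const_mul C
    have hden : HasDerivAt (fun y : ℝ => (1 - 2*y)^(n+1))
        ((n+1 : ℕ) * (1 - 2*x)^n * (-2)) x := by
      simpa using (hinner.fun_pow (n+1))
    have hden0 : (1 - 2*x)^(n+1) ≠ 0 := by positivity
    have := hnum.fun_div hden hden0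
    refine this.congr_deriv ?_
    have h1 : Real.sqrt (1-2*x) * Real.sqrt (1-2*x) = 1-2*x :=
      Real.mul_self_sqrt hu.le
    set s := Real.sqrt (1 - 2*x) with hsd
    rw [← h1]
    have hs0 : s ≠ 0 := hs.ne'
    push_cast
    field_simp
    ring
  intro n
  induction n with
  | zero =>
    intro x hx
    have hu : 0 < 1 - 2*x := upos hx
    have hs : 0 < Real.sqrt (1 - 2*x) := Real.sqrt_pos.mpr hu
    have hinner : HasDerivAt (fun y : ℝ => 1 - 2*y) (-2) x := by
      simpa using ((hasDerivAt_id x).const_mul (2:ℝ)).const_sub 1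
    have hsq : HasDerivAt (fun y : ℝ => Real.sqrt (1 - 2*y))
        (1 / (2 * Real.sqrt (1 - 2*x)) * (-2)) x :=
      (Real.hasDerivAt_sqrt hu.ne').comp x hinner
    have hB : HasDerivAt B (0 - 1 / (2 * Real.sqrt (1 - 2*x)) * (-2)) x := by
      exact (hasDerivAt_const x (1:ℝ)).fun_sub hsq
    rw [iteratedDeriv_one, hB.deriv]
    have h1 : Real.sqrt (1-2*x) * Real.sqrt (1-2*x) = 1-2*x :=
      Real.mul_self_sqrt hu.le
    simp only [range_zero, prod_empty, one_mul, pow_one]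
    set s := Real.sqrt (1 - 2*x) with hsd
    rw [← h1]
    have hs0 : s ≠ 0 := hs.ne'
    field_simp
    ring
  | succ n ih =>
    intro x hx
    rw [iteratedDeriv_succ]
    have hev : iteratedDeriv (n+1) B =ᶠ[𝓝 x]
        fun y => (∏ t ∈ range n, (2*(t:ℝ)+1)) * Real.sqrt (1 - 2*y) / (1 - 2*y)^(n+1) :=
      Filter.eventuallyEq_of_mem (Uopen.mem_nhds hx) ih
    rw [hev.deriv_eq, (key _ n hx).deriv, prod_range_succ]

-- combinatorial part

lemma prodasc (n k : ℕ) : (∏ t ∈ range k, (n + t)) = n.ascFactorial k := by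
  induction k with
  | zero => simp
  | succ k ih => rw [prod_range_succ, ih, Nat.ascFactorial_succ, mul_comm]

lemma oddprod (k : ℕ) : (∏ t ∈ range (k+1), (2*t+1)) = (2*k+1)‼ := by
  rw [prod_range_succ', Nat.doubleFactorial_eq_prod_odd]
  simp

lemma natid1 (k : ℕ) :
    (∏ t ∈ range (k+1), (2*t+1)) * (2*(k+1))‼ = (k+2)! * ∏ t ∈ range k, (k+3+t) := by
  rw [oddprod, prodasc]
  have h1 : (2*k+1)‼ * (2*(k+1))‼ = (2*k+2)! := by
    have := Nat.factorial_eq_mul_doubleFactorial (2*k+1)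
    rw [show 2*k+1+1 = 2*(k+1) by ring] at this
    rw [mul_comm, ← this]
    congr 1
  have h2 : (k+2)! * (k+3).ascFactorial k = (2*k+2)! := by
    have := Nat.factorial_mul_ascFactorial (k+2) k
    rw [show k+2+k = 2*k+2 by ring] at this
    rw [show k+3 = k+2+1 by ring]
    exact this
  rw [h1, h2]

noncomputable def F (m l : ℕ) : ℝ :=
  if l = 0 then 1
  else (m:ℝ) * (∏ t ∈ range (l-1), ((m:ℝ) + l + 1 + t)) / (((2*l)‼ : ℕ) : ℝ)

lemma F_zero (m : ℕ) : F m 0 = 1 := by simp [F]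

lemma dfpos (l : ℕ) : (0:ℝ) < (((2*l)‼ : ℕ) : ℝ) := by
  exact_mod_cast Nat.doubleFactorial_pos _

lemma F_succ (m l : ℕ) :
    F m (l+1) = (m:ℝ) * (∏ t ∈ range l, ((m:ℝ) + l + 2 + t)) / (((2*l+2)‼ : ℕ) : ℝ) := by
  simp only [F, Nat.succ_ne_zero, if_false, Nat.add_sub_cancel]
  have : ∀ t : ℕ, (m:ℝ) + (l+1:ℕ) + 1 + t = (m:ℝ) + l + 2 + t := by
    intro t; push_cast; ring
  rw [show 2*(l+1) = 2*l+2 by ring]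
  rw [Finset.prod_congr rfl fun t (_ : t ∈ range l) => this t]

lemma F_one (m : ℕ) : F m 1 = (m:ℝ) / 2 := by
  rw [F_succ]
  simp [Nat.doubleFactorial]

lemma FP1 (l : ℕ) : (∏ t ∈ range l, (2*(t:ℝ)+1)) / ((l+1)! : ℕ) = F 1 l := by
  cases l with
  | zero => simp [F_zero]
  | succ k =>
    rw [F_succ]
    have hd : (0:ℝ) < (((2*k+2)‼ : ℕ) : ℝ) := by exact_mod_cast Nat.doubleFactorial_pos _
    have hf : (0:ℝ) < (((k+1+1)! : ℕ) : ℝ) := by exact_mod_cast Nat.factorial_pos _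
    rw [div_eq_div_iff hf.ne' hd.ne']
    have hnat := natid1 k
    rw [show 2*(k+1) = 2*k+2 by ring] at hnat
    have hcast := congrArg (fun n : ℕ => (n:ℝ)) hnat
    push_cast at hcast
    have hp1 : (∏ x ∈ range k, ((1:ℝ) + ↑k + 2 + ↑x)) = ∏ x ∈ range k, ((k:ℝ) + 3 + ↑x) :=
      Finset.prod_congr rfl fun t _ => by ring
    push_cast
    rw [hp1]
    linear_combination hcast

lemma Frec (m l : ℕ) : F (m+1) (l+1) = F m (l+1) + F (m+2) l / 2 := by
  cases l with
  | zero => rw [F_one, F_one, F_zero]; push_cast; ring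
  | succ k =>
    rw [F_succ, F_succ, F_succ]
    have e1 : (∏ t ∈ range (k+1), ((((m+1:ℕ)):ℝ) + ((k+1:ℕ):ℝ) + 2 + (t:ℝ)))
        = (∏ t ∈ range k, ((m:ℝ) + k + 4 + t)) * ((m:ℝ) + 2*k + 4) := by
      rw [prod_range_succ]
      congr 1
      · exact Finset.prod_congr rfl fun t _ => by push_cast; ring
      · push_cast; ring
    have e2 : (∏ t ∈ range (k+1), ((m:ℝ) + ((k+1:ℕ):ℝ) + 2 + (t:ℝ)))
        = ((m:ℝ) + k + 3) * ∏ t ∈ range k, ((m:ℝ) + k + 4 + t) := by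
      rw [prod_range_succ']
      rw [mul_comm]
      congr 1
      · push_cast; ring
      · exact Finset.prod_congr rfl fun t _ => by push_cast; ring
    have e3 : (∏ t ∈ range k, ((((m+2:ℕ)):ℝ) + (k:ℝ) + 2 + (t:ℝ)))
        = ∏ t ∈ range k, ((m:ℝ) + k + 4 + t) := by
      exact Finset.prod_congr rfl fun t _ => by push_cast; ring
    have e4 : (2*(k+1)+2)‼ = (2*k+4) * (2*k+2)‼ := by
      rw [show 2*(k+1)+2 = (2*k+2)+2 by ring, Nat.doubleFactorial_add_two]
    rw [e1, e2, e3, e4]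
    have hD : (((2*k+2)‼ : ℕ) : ℝ) ≠ 0 := by
      exact_mod_cast (Nat.doubleFactorial_pos _).ne'
    set Q := ∏ t ∈ range k, ((m:ℝ) + k + 4 + t) with hQ
    push_cast
    field_simp
    ring

lemma iD_const (c : ℝ) : ∀ n, 1 ≤ n → iteratedDeriv n (fun _ : ℝ => c) = fun _ => 0 := by
  intro n hn
  induction n with
  | zero => omega
  | succ n ih =>
    rcases Nat.eq_zero_or_pos n with h | h
    · subst h; rw [iteratedDeriv_one]; funext x; simp
    · rw [iteratedDeriv_succ, ih h]; funext x; simp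

def P (m : ℕ) : Prop := (∀ n, n < m → a m n = 0) ∧ ∀ l, a m (m+l) = F m l

lemma P0 : P 0 := by
  constructor
  · intro n hn; omega
  · intro l
    have hfn : (fun x : ℝ => B x ^ 0) = fun _ => (1:ℝ) := by funext x; simp
    rcases Nat.eq_zero_or_pos l with h | h
    · subst h; simp [a, hfn, F_zero]
    · have : F 0 l = 0 := by
        simp only [F]
        rw [if_neg h.ne']
        simp
      rw [this]
      simp only [a, hfn, Nat.zero_add]
      rw [iD_const 1 l h]
      simp

lemma P1 : P 1 := by
  constructor
  · intro n hn
    interval_cases n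
    simp [a, B0]
  · intro l
    have hfn : (fun x : ℝ => B x ^ 1) = B := by funext x; simp
    have hd := derivB l 0 U0
    have : (1 - 2*(0:ℝ)) = 1 := by norm_num
    rw [this] at hd
    simp only [Real.sqrt_one, one_pow, mul_one, div_one] at hd
    simp only [a, hfn]
    rw [show 1 + l = l + 1 by ring, hd, ← FP1 l]

lemma Pstep (m : ℕ) (h0 : P m) (h1 : P (m+1)) : P (m+2) := by
  have rec2 : ∀ n, 1 ≤ n → a (m+2) n = 2*(a (m+1) n - a m (n-1)) := by
    intro n hn
    have := arec m n hn
    linarith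
  constructor
  · intro n hn
    cases n with
    | zero =>
      simp only [a, iteratedDeriv_zero]
      rw [B0]
      simp
    | succ j =>
      rw [rec2 (j+1) (by omega)]
      rcases Nat.lt_or_ge (j+1) (m+1) with h | h
      · rw [h1.1 (j+1) h]
        rw [show j+1-1 = j from rfl, h0.1 j (by omega)]
        simp
      · have hj : j = m := by omega
        rw [hj]
        have e1 : a (m+1) (m+1) = 1 := by
          have := h1.2 0
          simpa [F_zero] using this
        have e2 : a m (m+1-1) = 1 := by
          have := h0.2 0
          simpa [F_zero] using this
        rw [e1, e2]
        ring
  · intro l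
    rw [show m+2+l = (m+2)+l by rfl, rec2 (m+2+l) (by omega)]
    have e1 : a (m+1) (m+2+l) = F (m+1) (l+1) := by
      rw [show m+2+l = (m+1)+(l+1) by ring]
      exact h1.2 (l+1)
    have e2 : a m (m+2+l-1) = F m (l+1) := by
      rw [show m+2+l-1 = m+(l+1) by omega]
      exact h0.2 (l+1)
    rw [e1, e2]
    have := Frec m l
    linarith

lemma Pall (m : ℕ) : P m := by
  suffices h : ∀ k, P k ∧ P (k+1) from (h m).1
  intro k
  induction k with
  | zero => exact ⟨P0, P1⟩
  | succ k ih => exact ⟨ih.2, Pstep k ih.1 ih.2⟩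

end TCB

/-- Taylor coefficients of `B(x)^(i-1)` at `0`, where `B(x) = 1 - √(1 - 2x)`: the coefficient
of `x^(i-1)` is `1`, and for `l ≥ 1` the coefficient of `x^(i-1+l)` is
`(i-1)·(i+l)(i+l+1)⋯(i+2l-2)/(2l)‼`. -/
theorem taylor_coeff_B_pow (i : ℕ) (hi : 1 ≤ i) :
    (iteratedDeriv (i - 1) (fun x : ℝ => (1 - Real.sqrt (1 - 2 * x)) ^ (i - 1)) 0
        / (((i - 1)! : ℕ) : ℝ) = 1) ∧
    ∀ l : ℕ, 1 ≤ l →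
      iteratedDeriv (i - 1 + l) (fun x : ℝ => (1 - Real.sqrt (1 - 2 * x)) ^ (i - 1)) 0
          / (((i - 1 + l)! : ℕ) : ℝ)
        = ((i : ℝ) - 1) * (∏ t ∈ Finset.range (l - 1), ((i : ℝ) + l + t))
            / (((2 * l)‼ : ℕ) : ℝ) := by
  obtain ⟨m, rfl⟩ : ∃ m, i = m + 1 := ⟨i - 1, by omega⟩
  have hidx : m + 1 - 1 = m := rfl
  have hfn : (fun x : ℝ => (1 - Real.sqrt (1 - 2 * x)) ^ m)
      = fun x => TCB.B x ^ m := rfl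
  constructor
  · have h := (TCB.Pall m).2 0
    rw [TCB.F_zero] at h
    simp only [TCB.a, Nat.add_zero] at h
    rw [hidx, hfn, h]
  · intro l hl
    obtain ⟨k, rfl⟩ : ∃ k, l = k + 1 := ⟨l - 1, by omega⟩
    have h := (TCB.Pall m).2 (k+1)
    rw [TCB.F_succ] at h
    simp only [TCB.a] at h
    rw [hidx, hfn]
    rw [h]
    rw [show 2*(k+1) = 2*k+2 by ring]
    have hp : (∏ t ∈ Finset.range (k+1-1), (((m+1:ℕ):ℝ) + ((k+1:ℕ):ℝ) + (t:ℝ)))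
        = ∏ t ∈ Finset.range k, ((m:ℝ) + (k:ℝ) + 2 + (t:ℝ)) := by
      exact Finset.prod_congr rfl fun t _ => by push_cast; ring
    rw [hp]
    push_cast
    ring
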